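/- Every linear isometry U of ℝ^N (with N ≥ 3) that maps the polygonal sphere S^{N−1,1}_ℝ onto itself must preserve the set {±e_1,…,±e_N} of signed standard basis vectors, and hence U is a signed permutation matrix (an element of the hyperoctahedral group H_N). -/

import Mathlib

private lemma sum_pair_support {N : ℕ} {f : Fin N → ℝ} {i j : Fin N} (hij : i ≠ j)
    (h : ∀ k, k ≠ i → k ≠ j → f k = 0) : ∑ k, f k = f i + f j := by
  rw [← Finset.sum_pair hij]
  refine (Finset.sum_subset (Finset.subset_univ _) ?_).symm
  intro k _ hk
  simp only [Finset.mem_insert, Finset.mem_singleton, not_or] at hk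
  exact h k hk.1 hk.2

private lemma wit_lemma {N : ℕ} {x w : Fin N → ℝ} {i j : Fin N} (hij : i ≠ j)
    (hxi : x i ≠ 0) (hxj : x j ≠ 0) (hxsupp : ∀ k, k ≠ i → k ≠ j → x k = 0)
    (hx1 : ∑ k, x k ^ 2 = 1)
    (hw1 : ∑ k, w k ^ 2 = 1)
    (hw3 : ∀ a b c, a ≠ b → b ≠ c → a ≠ c → w a * w b * w c = 0)
    (hxw : ∑ k, x k * w k = 0)
    (hxw3 : ∀ a b c, a ≠ b → b ≠ c → a ≠ c → (x a + w a) * (x b + w b) * (x c + w c) = 0) :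
    (∀ k, w k = (if k = i then x j else if k = j then -x i else 0)) ∨
    (∀ k, w k = -(if k = i then x j else if k = j then -x i else 0)) := by
  have hwsupp : ∀ k, k ≠ i → k ≠ j → w k = 0 := by
    intro k hki hkj
    by_contra hwk
    have h3 := hxw3 i j k hij (Ne.symm hkj) (Ne.symm hki)
    rw [hxsupp k hki hkj, zero_add] at h3
    rcases mul_eq_zero.mp h3 with h3 | h3
    · rcases mul_eq_zero.mp h3 with h3 | h3
      · -- w i = -x i
        have hwi : w i = -x i := by linarith
        have hwine : w i ≠ 0 := by rw [hwi]; exact neg_ne_zero.mpr hxi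
        have hwj : w j = 0 := by
          have := hw3 i j k hij (Ne.symm hkj) (Ne.symm hki)
          rcases mul_eq_zero.mp this with h | h
          · rcases mul_eq_zero.mp h with h | h
            · exact absurd h hwine
            · exact h
          · exact absurd h hwk
        have hsum : ∑ k, x k * w k = x i * w i + x j * w j :=
          sum_pair_support hij (fun k h1 h2 => by rw [hxsupp k h1 h2, zero_mul])
        rw [hxw, hwi, hwj] at hsum
        have := mul_self_pos.mpr hxi
        nlinarith
      · -- w j = -x j
        have hwj : w j = -x j := by linarith
        have hwjne : w j ≠ 0 := by rw [hwj]; exact neg_ne_zero.mpr hxj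
        have hwi : w i = 0 := by
          have := hw3 j i k (Ne.symm hij) (Ne.symm hki) (Ne.symm hkj)
          rcases mul_eq_zero.mp this with h | h
          · rcases mul_eq_zero.mp h with h | h
            · exact absurd h hwjne
            · exact h
          · exact absurd h hwk
        have hsum : ∑ k, x k * w k = x i * w i + x j * w j :=
          sum_pair_support hij (fun k h1 h2 => by rw [hxsupp k h1 h2, zero_mul])
        rw [hxw, hwi, hwj] at hsum
        have := mul_self_pos.mpr hxj
        nlinarith
    · exact hwk h3
  have e1 : x i * w i + x j * w j = 0 := by
    have hsum : ∑ k, x k * w k = x i * w i + x j * w j :=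
      sum_pair_support hij (fun k h1 h2 => by rw [hxsupp k h1 h2, zero_mul])
    rw [hxw] at hsum; linarith
  have e2 : w i ^ 2 + w j ^ 2 = 1 := by
    have hsum : ∑ k, w k ^ 2 = w i ^ 2 + w j ^ 2 :=
      sum_pair_support hij (fun k h1 h2 => by rw [hwsupp k h1 h2]; ring)
    rw [hw1] at hsum; linarith
  have e3 : x i ^ 2 + x j ^ 2 = 1 := by
    have hsum : ∑ k, x k ^ 2 = x i ^ 2 + x j ^ 2 :=
      sum_pair_support hij (fun k h1 h2 => by rw [hxsupp k h1 h2]; ring)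
    rw [hx1] at hsum; linarith
  set t := w i / x j with ht
  have hwi : w i = t * x j := by rw [ht, div_mul_cancel₀ _ hxj]
  have hwj : w j = -t * x i := by
    have h0 : x j * (w j + t * x i) = 0 := by
      have hq : x j * (w i / x j) = w i := by field_simp
      rw [ht, mul_add, ← mul_assoc, hq]
      linear_combination e1
    rcases mul_eq_zero.mp h0 with h | h
    · exact absurd h hxj
    · linarith
  have ht2 : t * t = 1 := by
    have h4 : t * t * (x i ^ 2 + x j ^ 2) = w i ^ 2 + w j ^ 2 := by rw [hwi, hwj]; ring
    rw [e3, mul_one, e2] at h4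
    exact h4
  rcases mul_self_eq_one_iff.mp ht2 with h | h
  · left
    intro k
    by_cases hk1 : k = i
    · subst hk1; rw [hwi, h, one_mul, if_pos rfl]
    · by_cases hk2 : k = j
      · subst hk2; rw [hwj, h, if_neg (Ne.symm hij), if_pos rfl]; ring
      · rw [hwsupp k hk1 hk2, if_neg hk1, if_neg hk2]
  · right
    intro k
    by_cases hk1 : k = i
    · subst hk1; rw [hwi, h, if_pos rfl]; ring
    · by_cases hk2 : k = j
      · subst hk2; rw [hwj, h, if_neg (Ne.symm hij), if_pos rfl]; ring
      · rw [hwsupp k hk1 hk2, if_neg hk1, if_neg hk2, neg_zero]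

private lemma key_lemma {N : ℕ} {x y z : Fin N → ℝ}
    (hx1 : ∑ k, x k ^ 2 = 1)
    (hx3 : ∀ a b c : Fin N, a ≠ b → b ≠ c → a ≠ c → x a * x b * x c = 0)
    (hy1 : ∑ k, y k ^ 2 = 1)
    (hy3 : ∀ a b c : Fin N, a ≠ b → b ≠ c → a ≠ c → y a * y b * y c = 0)
    (hz1 : ∑ k, z k ^ 2 = 1)
    (hz3 : ∀ a b c : Fin N, a ≠ b → b ≠ c → a ≠ c → z a * z b * z c = 0)
    (hxy : ∑ k, x k * y k = 0) (hxz : ∑ k, x k * z k = 0)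
    (hyzne : y ≠ z) (hyzne' : y ≠ fun k => -z k)
    (hxy3 : ∀ a b c : Fin N, a ≠ b → b ≠ c → a ≠ c →
      (x a + y a) * (x b + y b) * (x c + y c) = 0)
    (hxz3 : ∀ a b c : Fin N, a ≠ b → b ≠ c → a ≠ c →
      (x a + z a) * (x b + z b) * (x c + z c) = 0) :
    ∀ a b, a ≠ b → x a * x b = 0 := by
  by_contra h
  push_neg at h
  obtain ⟨i, j, hij, hxij⟩ := h
  have hxi : x i ≠ 0 := fun h => hxij (by rw [h, zero_mul])
  have hxj : x j ≠ 0 := fun h => hxij (by rw [h, mul_zero])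
  have hxsupp : ∀ k, k ≠ i → k ≠ j → x k = 0 := by
    intro k hki hkj
    have h3 := hx3 i j k hij (Ne.symm hkj) (Ne.symm hki)
    rcases mul_eq_zero.mp h3 with h3 | h3
    · exact absurd h3 hxij
    · exact h3
  rcases wit_lemma hij hxi hxj hxsupp hx1 hy1 hy3 hxy hxy3 with hy | hy <;>
    rcases wit_lemma hij hxi hxj hxsupp hx1 hz1 hz3 hxz hxz3 with hz | hz
  · exact hyzne (funext fun k => (hy k).trans (hz k).symm)
  · exact hyzne' (funext fun k => by simp [hy k, hz k])
  · exact hyzne' (funext fun k => by simp [hy k, hz k])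
  · exact hyzne (funext fun k => by rw [hy k, hz k])

set_option maxHeartbeats 1000000 in
theorem isometry_of_polygonal_sphere_is_signed_permutation (N : ℕ) (hN : 3 ≤ N)
    (U : EuclideanSpace ℝ (Fin N) ≃ₗᵢ[ℝ] EuclideanSpace ℝ (Fin N))
    (hU : ⇑U '' {x : EuclideanSpace ℝ (Fin N) | (∑ i, x i ^ 2) = 1 ∧
        ∀ i j k : Fin N, i ≠ j → j ≠ k → i ≠ k → x i * x j * x k = 0} =
      {x : EuclideanSpace ℝ (Fin N) | (∑ i, x i ^ 2) = 1 ∧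
        ∀ i j k : Fin N, i ≠ j → j ≠ k → i ≠ k → x i * x j * x k = 0}) :
    (⇑U '' {x : EuclideanSpace ℝ (Fin N) | (∑ i, x i ^ 2) = 1 ∧
        ∀ i j : Fin N, i ≠ j → x i * x j = 0} =
      {x : EuclideanSpace ℝ (Fin N) | (∑ i, x i ^ 2) = 1 ∧
        ∀ i j : Fin N, i ≠ j → x i * x j = 0}) ∧
    ∃ (π : Equiv.Perm (Fin N)) (ε : Fin N → ℝ),
      (∀ i, ε i = 1 ∨ ε i = -1) ∧
      ∀ (x : EuclideanSpace ℝ (Fin N)) (i : Fin N), U x i = ε i * x (π i) := by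
  classical
  set S2 : Set (EuclideanSpace ℝ (Fin N)) := {x : EuclideanSpace ℝ (Fin N) |
      (∑ i, x i ^ 2) = 1 ∧
      ∀ i j k : Fin N, i ≠ j → j ≠ k → i ≠ k → x i * x j * x k = 0} with hS2def
  -- transfer of membership
  have hmem : ∀ v : EuclideanSpace ℝ (Fin N), v ∈ S2 ↔ U v ∈ S2 := by
    intro v
    constructor
    · intro hv; rw [← hU]; exact Set.mem_image_of_mem _ hv
    · intro hv
      rw [← hU] at hv
      obtain ⟨w, hw, hwv⟩ := hv
      rwa [← U.injective hwv]
  -- inner products as sums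
  have hinnersum : ∀ v w : EuclideanSpace ℝ (Fin N),
      @inner ℝ _ _ v w = ∑ k, v k * w k := fun v w => by
    simp [PiLp.inner_apply, RCLike.inner_apply, mul_comm]
  have hsyminner : ∀ v w : EuclideanSpace ℝ (Fin N),
      (∑ k, U.symm v k * U.symm w k) = ∑ k, v k * w k := by
    intro v w
    rw [← hinnersum, ← hinnersum]
    exact U.symm.inner_map_map v w
  -- singles are in S2
  have hsingle : ∀ i : Fin N, EuclideanSpace.single i (1:ℝ) ∈ S2 := by
    intro i
    constructor
    · rw [Finset.sum_eq_single i]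
      · simp
      · intro b _ hb; simp [EuclideanSpace.single_apply, hb]
      · intro h; exact absurd (Finset.mem_univ i) h
    · intro a b c hab hbc hac
      by_cases ha : a = i <;> by_cases hb : b = i <;>
        simp_all [EuclideanSpace.single_apply]
  -- normalized pair sums are in S2
  have hpairS2 : ∀ i j : Fin N, i ≠ j →
      (Real.sqrt 2)⁻¹ • (EuclideanSpace.single i (1:ℝ) + EuclideanSpace.single j (1:ℝ)) ∈ S2 := by
    intro i j hij
    set p : EuclideanSpace ℝ (Fin N) :=
      (Real.sqrt 2)⁻¹ • (EuclideanSpace.single i (1:ℝ) + EuclideanSpace.single j (1:ℝ)) with hp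
    have hz : ∀ m : Fin N, m ≠ i → m ≠ j → p m = 0 := by
      intro m h1 h2
      simp [hp, PiLp.smul_apply, PiLp.add_apply, EuclideanSpace.single_apply, h1, h2]
    have hsq : ((Real.sqrt 2)⁻¹ : ℝ) ^ 2 = 1/2 := by
      rw [inv_pow, Real.sq_sqrt] <;> norm_num
    constructor
    · rw [sum_pair_support hij (fun k h1 h2 => by rw [hz k h1 h2]; ring)]
      have hpi : p i = (Real.sqrt 2)⁻¹ := by
        simp [hp, PiLp.smul_apply, PiLp.add_apply, EuclideanSpace.single_apply, hij]
      have hpj : p j = (Real.sqrt 2)⁻¹ := by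
        simp [hp, PiLp.smul_apply, PiLp.add_apply, EuclideanSpace.single_apply, Ne.symm hij]
      rw [hpi, hpj, hsq]; norm_num
    · intro a b c hab hbc hac
      by_cases ha : a ≠ i ∧ a ≠ j
      · rw [hz a ha.1 ha.2]; ring
      by_cases hb : b ≠ i ∧ b ≠ j
      · rw [hz b hb.1 hb.2]; ring
      by_cases hc : c ≠ i ∧ c ≠ j
      · rw [hz c hc.1 hc.2]; ring
      exfalso
      have ha' : a = i ∨ a = j := by tauto
      have hb' : b = i ∨ b = j := by tauto
      have hc' : c = i ∨ c = j := by tauto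
      rcases ha' with rfl | rfl <;> rcases hb' with rfl | rfl <;>
        rcases hc' with rfl | rfl <;>
        first
          | exact hab rfl
          | exact hbc rfl
          | exact hac rfl
  -- x_i := U.symm (single i 1) is in S2
  have hxS2 : ∀ i : Fin N, U.symm (EuclideanSpace.single i (1:ℝ)) ∈ S2 := by
    intro i
    rw [hmem, U.apply_symm_apply]
    exact hsingle i
  -- triple products of sums x_i + x_j vanish
  have hsum3 : ∀ i j : Fin N, i ≠ j → ∀ a b c : Fin N, a ≠ b → b ≠ c → a ≠ c →
      (U.symm (EuclideanSpace.single i (1:ℝ)) a + U.symm (EuclideanSpace.single j (1:ℝ)) a) *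
      (U.symm (EuclideanSpace.single i (1:ℝ)) b + U.symm (EuclideanSpace.single j (1:ℝ)) b) *
      (U.symm (EuclideanSpace.single i (1:ℝ)) c + U.symm (EuclideanSpace.single j (1:ℝ)) c) = 0 := by
    intro i j hij a b c hab hbc hac
    set q : EuclideanSpace ℝ (Fin N) := (Real.sqrt 2)⁻¹ •
      (U.symm (EuclideanSpace.single i (1:ℝ)) + U.symm (EuclideanSpace.single j (1:ℝ))) with hq
    have hUq : U q = (Real.sqrt 2)⁻¹ •
        (EuclideanSpace.single i (1:ℝ) + EuclideanSpace.single j (1:ℝ)) := by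
      rw [hq, map_smul, map_add, U.apply_symm_apply, U.apply_symm_apply]
    have hqS2 : q ∈ S2 := by
      rw [hmem, hUq]; exact hpairS2 i j hij
    have h3 := hqS2.2 a b c hab hbc hac
    have hc0 : ((Real.sqrt 2)⁻¹ : ℝ) ≠ 0 := by
      simp [Real.sqrt_eq_zero']
    have hqa : ∀ m : Fin N, q m = (Real.sqrt 2)⁻¹ *
        (U.symm (EuclideanSpace.single i (1:ℝ)) m + U.symm (EuclideanSpace.single j (1:ℝ)) m) :=
      fun m => rfl
    rw [hqa a, hqa b, hqa c] at h3
    have h4 : ((Real.sqrt 2)⁻¹ : ℝ)^3 *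
        ((U.symm (EuclideanSpace.single i (1:ℝ)) a + U.symm (EuclideanSpace.single j (1:ℝ)) a) *
        (U.symm (EuclideanSpace.single i (1:ℝ)) b + U.symm (EuclideanSpace.single j (1:ℝ)) b) *
        (U.symm (EuclideanSpace.single i (1:ℝ)) c + U.symm (EuclideanSpace.single j (1:ℝ)) c)) = 0 := by
      rw [← h3]; ring
    exact (mul_eq_zero.mp h4).resolve_left (pow_ne_zero 3 hc0)
  -- inner products of the x_i
  have hinner0 : ∀ i j : Fin N, i ≠ j →
      ∑ k, U.symm (EuclideanSpace.single i (1:ℝ)) k * U.symm (EuclideanSpace.single j (1:ℝ)) k = 0 := by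
    intro i j hij
    rw [hsyminner]
    apply Finset.sum_eq_zero
    intro k _
    by_cases hk : k = i <;> simp [EuclideanSpace.single_apply, hk, hij]
  -- x_i are pairwise distinct and non-antipodal
  have hne1 : ∀ i j : Fin N, i ≠ j →
      U.symm (EuclideanSpace.single i (1:ℝ)) ≠ U.symm (EuclideanSpace.single j (1:ℝ)) := by
    intro i j hij h
    have := U.symm.injective h
    have h2 := congrArg (fun v => v i) this
    simp [EuclideanSpace.single_apply, hij] at h2
  have hne2 : ∀ i j : Fin N, i ≠ j →
      U.symm (EuclideanSpace.single i (1:ℝ)) ≠ fun k => -(U.symm (EuclideanSpace.single j (1:ℝ)) k) := by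
    intro i j hij h
    have h' : U.symm (EuclideanSpace.single i (1:ℝ)) = -(U.symm (EuclideanSpace.single j (1:ℝ))) := by
      ext k; simpa using congrFun h k
    rw [← map_neg] at h'
    have := U.symm.injective h'
    have h2 := congrArg (fun v => v i) this
    simp [EuclideanSpace.single_apply, hij] at h2
  -- each x_i has exactly one nonzero coordinate, equal to ±1
  have hone : ∀ i : Fin N, ∃ m : Fin N,
      (∀ k, k ≠ m → U.symm (EuclideanSpace.single i (1:ℝ)) k = 0) ∧
      (U.symm (EuclideanSpace.single i (1:ℝ)) m = 1 ∨ U.symm (EuclideanSpace.single i (1:ℝ)) m = -1) := by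
    intro i
    have hcard : 1 < (Finset.univ.erase i : Finset (Fin N)).card := by
      rw [Finset.card_erase_of_mem (Finset.mem_univ i), Finset.card_univ, Fintype.card_fin]
      omega
    obtain ⟨j, hj, k, hk, hjk⟩ := Finset.one_lt_card.mp hcard
    have hji : j ≠ i := Finset.ne_of_mem_erase hj
    have hki : k ≠ i := Finset.ne_of_mem_erase hk
    have hpair := key_lemma (hxS2 i).1 (hxS2 i).2 (hxS2 j).1 (hxS2 j).2 (hxS2 k).1 (hxS2 k).2
      (hinner0 i j (Ne.symm hji)) (hinner0 i k (Ne.symm hki))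
      (fun h => hne1 j k hjk (by ext m; exact congrFun h m)) (hne2 j k hjk)
      (fun a b c hab hbc hac => by
        have := hsum3 i j (Ne.symm hji) a b c hab hbc hac; linarith [this])
      (fun a b c hab hbc hac => by
        have := hsum3 i k (Ne.symm hki) a b c hab hbc hac; linarith [this])
    obtain ⟨m, hm⟩ : ∃ m, U.symm (EuclideanSpace.single i (1:ℝ)) m ≠ 0 := by
      by_contra hall
      push_neg at hall
      have : ∑ k, U.symm (EuclideanSpace.single i (1:ℝ)) k ^ 2 = 0 :=
        Finset.sum_eq_zero fun k _ => by rw [hall k]; ring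
      rw [(hxS2 i).1] at this
      norm_num at this
    refine ⟨m, fun k hk => ?_, ?_⟩
    · have := hpair m k (Ne.symm hk)
      rcases mul_eq_zero.mp this with h | h
      · exact absurd h hm
      · exact h
    · have hsum : ∑ k, U.symm (EuclideanSpace.single i (1:ℝ)) k ^ 2 =
          U.symm (EuclideanSpace.single i (1:ℝ)) m ^ 2 := by
        apply Finset.sum_eq_single
        · intro b _ hb
          have := hpair m b (Ne.symm hb)
          rcases mul_eq_zero.mp this with h | h
          · exact absurd h hm
          · rw [h]; ring
        · intro h; exact absurd (Finset.mem_univ m) h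
      rw [(hxS2 i).1] at hsum
      have hx2 : U.symm (EuclideanSpace.single i (1:ℝ)) m *
          U.symm (EuclideanSpace.single i (1:ℝ)) m = 1 := by nlinarith [hsum]
      exact mul_self_eq_one_iff.mp hx2
  choose π' h0 h1 using hone
  set ε : Fin N → ℝ := fun i => U.symm (EuclideanSpace.single i (1:ℝ)) (π' i) with hε
  have hεpm : ∀ i, ε i = 1 ∨ ε i = -1 := fun i => h1 i
  have hεne : ∀ i, ε i ≠ 0 := by
    intro i; rcases hεpm i with h | h <;> rw [h] <;> norm_num
  have hformula : ∀ (v : EuclideanSpace ℝ (Fin N)) (i : Fin N),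
      U v i = ε i * v (π' i) := by
    intro v i
    have hinner : @inner ℝ _ _ (U v) (EuclideanSpace.single i (1:ℝ))
        = @inner ℝ _ _ v (U.symm (EuclideanSpace.single i (1:ℝ))) := by
      conv_lhs => rw [← U.apply_symm_apply (EuclideanSpace.single i (1:ℝ))]
      exact U.inner_map_map v _
    rw [hinnersum, hinnersum] at hinner
    have hL : ∑ k, U v k * (EuclideanSpace.single i (1:ℝ)) k = U v i := by
      rw [Finset.sum_eq_single i]
      · rw [EuclideanSpace.single_apply, if_pos rfl, mul_one]
      · intro b _ hb; rw [EuclideanSpace.single_apply, if_neg hb, mul_zero]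
      · intro h; exact absurd (Finset.mem_univ i) h
    have hR : ∑ k, v k * U.symm (EuclideanSpace.single i (1:ℝ)) k
        = ε i * v (π' i) := by
      rw [Finset.sum_eq_single (π' i)]
      · exact mul_comm _ _
      · intro b _ hb; rw [h0 i b hb]; ring
      · intro h; exact absurd (Finset.mem_univ _) h
    rw [hL, hR] at hinner
    exact hinner
  have hinj : Function.Injective π' := by
    intro i j hijp
    by_contra hij
    have h00 := hinner0 i j hij
    have hsum : ∑ k, U.symm (EuclideanSpace.single i (1:ℝ)) k *
          U.symm (EuclideanSpace.single j (1:ℝ)) k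
        = U.symm (EuclideanSpace.single i (1:ℝ)) (π' i) *
          U.symm (EuclideanSpace.single j (1:ℝ)) (π' i) :=
      Finset.sum_eq_single _ (fun b _ hb => by rw [h0 i b hb]; ring)
        (fun h => absurd (Finset.mem_univ _) h)
    rw [h00] at hsum
    have h5 : U.symm (EuclideanSpace.single j (1:ℝ)) (π' i) = ε j := by rw [hijp]
    rw [h5] at hsum
    exact (mul_ne_zero (hεne i) (hεne j)) hsum.symm
  set π : Equiv.Perm (Fin N) := Equiv.ofBijective π' (Finite.injective_iff_bijective.mp hinj)
    with hπ
  have hπapp : ∀ i, π i = π' i := fun i => rfl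
  refine ⟨?_, π, ε, hεpm, fun v i => hformula v i⟩
  ext v
  simp only [Set.mem_image, Set.mem_setOf_eq]
  constructor
  · rintro ⟨u, ⟨hu1, hu2⟩, rfl⟩
    constructor
    · have hc : ∀ i ∈ Finset.univ, U u i ^ 2 = (fun k => u k ^ 2) (π i) := by
        intro i _
        rw [hformula u i, hπapp i]
        rcases hεpm i with h | h <;> rw [h] <;> ring
      rw [Finset.sum_congr rfl hc, Equiv.sum_comp π (fun k => u k ^ 2)]
      exact hu1
    · intro a b hab
      rw [hformula u a, hformula u b]
      have h := hu2 (π' a) (π' b) (fun hcc => hab (hinj hcc))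
      linear_combination (ε a * ε b) * h
  · intro hv
    have hu : ∀ i, U.symm v (π' i) = ε i * v i := by
      intro i
      have h := hformula (U.symm v) i
      rw [U.apply_symm_apply] at h
      rcases hεpm i with h2 | h2 <;> rw [h2] at h ⊢ <;> linarith
    refine ⟨U.symm v, ⟨?_, ?_⟩, U.apply_symm_apply v⟩
    · rw [← Equiv.sum_comp π (fun k => U.symm v k ^ 2)]
      have hc : ∀ i ∈ Finset.univ, (fun k => U.symm v k ^ 2) (π i) = v i ^ 2 := by
        intro i _
        simp only []
        rw [hπapp i, hu i]
        rcases hεpm i with h2 | h2 <;> rw [h2] <;> ring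
      rw [Finset.sum_congr rfl hc]
      exact hv.1
    · intro a b hab
      have ha : U.symm v a = ε (π.symm a) * v (π.symm a) := by
        conv_lhs => rw [← π.apply_symm_apply a]
        exact hu (π.symm a)
      have hb : U.symm v b = ε (π.symm b) * v (π.symm b) := by
        conv_lhs => rw [← π.apply_symm_apply b]
        exact hu (π.symm b)
      rw [ha, hb]
      have h := hv.2 (π.symm a) (π.symm b)
        (fun hcc => hab (by rw [← π.apply_symm_apply a, ← π.apply_symm_apply b, hcc]))
      linear_combination (ε (π.symm a) * ε (π.symm b)) * h
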